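/- (Interpolation transfer for equilibrium logic, OW version) Let α, β be formulas over a finite vocabulary. If α has an equilibrium model over V(α) and β is true in every expansion of every equilibrium model of α to V(α) ∪ V(β) (α |~_ow β), then, assuming HT interpolation, there is a formula γ with V(γ) ⊆ V(α) ∩ V(β) such that α |~_ow γ and γ ⊨_HT β. -/
import Mathlib


/-- Propositional formulas over atoms ℕ. -/
inductive Fm where
  | atom : ℕ → Fm
  | bot  : Fm
  | and  : Fm → Fm → Fm
  | or   : Fm → Fm → Fm
  | imp  : Fm → Fm → Fm
deriving DecidableEq

def Fm.neg (φ : Fm) : Fm := Fm.imp φ Fm.bot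
def Fm.top : Fm := Fm.imp Fm.bot Fm.bot

/-- Truth at the "there" world (classical truth in T). -/
def satT (T : Set ℕ) : Fm → Prop
  | .atom a  => a ∈ T
  | .bot     => False
  | .and φ ψ => satT T φ ∧ satT T ψ
  | .or φ ψ  => satT T φ ∨ satT T ψ
  | .imp φ ψ => satT T φ → satT T ψ

/-- Truth at the "here" world of the HT-interpretation ⟨H,T⟩. -/
def satH (H T : Set ℕ) : Fm → Prop
  | .atom a  => a ∈ H
  | .bot     => False
  | .and φ ψ => satH H T φ ∧ satH H T ψ
  | .or φ ψ  => satH H T φ ∨ satH H T ψ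
  | .imp φ ψ => (satH H T φ → satH H T ψ) ∧ (satT T φ → satT T ψ)

/-- ⟨H,T⟩ is an HT-model of φ (true at both worlds). -/
def htSat (H T : Set ℕ) (φ : Fm) : Prop := satH H T φ ∧ satT T φ

/-- ⟨H,T⟩ is an HT-model of the theory Γ. -/
def htSatTh (H T : Set ℕ) (Γ : Set Fm) : Prop := ∀ φ ∈ Γ, htSat H T φ

/-- Atoms occurring in a formula. -/
def vars : Fm → Finset ℕ
  | .atom a  => {a}
  | .bot     => ∅
  | .and φ ψ => vars φ ∪ vars ψ
  | .or φ ψ  => vars φ ∪ vars ψ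
  | .imp φ ψ => vars φ ∪ vars ψ

/-- Atoms occurring in a theory. -/
def varsTh (Γ : Set Fm) : Set ℕ := ⋃ φ ∈ Γ, (vars φ : Set ℕ)

/-- HT-consequence: every world of every HT-interpretation making all of Γ true makes φ true. -/
def htConseqTh (Γ : Set Fm) (φ : Fm) : Prop :=
  ∀ H T : Set ℕ, H ⊆ T →
    ((∀ ψ ∈ Γ, satH H T ψ) → satH H T φ) ∧ ((∀ ψ ∈ Γ, satT T ψ) → satT T φ)

/-- ⟨T,T⟩ is an equilibrium model of Γ over vocabulary V. -/
def eqModel (V : Set ℕ) (Γ : Set Fm) (T : Set ℕ) : Prop :=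
  T ⊆ V ∧ htSatTh T T Γ ∧ ∀ H : Set ℕ, H ⊆ T → H ≠ T → ¬ htSatTh H T Γ

def bigAnd (l : List Fm) : Fm := l.foldr Fm.and Fm.top
def bigOr (l : List Fm) : Fm := l.foldr Fm.or Fm.bot
noncomputable def conjAtoms (s : Finset ℕ) : Fm := bigAnd (s.toList.map Fm.atom)
noncomputable def disjAtoms (s : Finset ℕ) : Fm := bigOr (s.toList.map Fm.atom)
/-- δ_T over vocabulary V : (⋀_{a∈T} a) ∧ ¬(⋁_{a∈V∖T} a). -/
noncomputable def delta (V T : Finset ℕ) : Fm := Fm.and (conjAtoms T) (Fm.neg (disjAtoms (V \ T)))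

/-! ### Auxiliary lemmas -/

lemma satT_congr (φ : Fm) (T T' : Set ℕ) (h : ∀ a ∈ vars φ, (a ∈ T ↔ a ∈ T')) :
    satT T φ ↔ satT T' φ := by
  induction φ with
  | atom a => exact h a (by simp [vars])
  | bot => simp [satT]
  | and φ ψ ih1 ih2 =>
      simp only [satT]
      rw [ih1 (fun a ha => h a (by simp [vars, ha])), ih2 (fun a ha => h a (by simp [vars, ha]))]
  | or φ ψ ih1 ih2 =>
      simp only [satT]
      rw [ih1 (fun a ha => h a (by simp [vars, ha])), ih2 (fun a ha => h a (by simp [vars, ha]))]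
  | imp φ ψ ih1 ih2 =>
      simp only [satT]
      rw [ih1 (fun a ha => h a (by simp [vars, ha])), ih2 (fun a ha => h a (by simp [vars, ha]))]

lemma satH_congr (φ : Fm) (H T H' T' : Set ℕ)
    (hH : ∀ a ∈ vars φ, (a ∈ H ↔ a ∈ H')) (hT : ∀ a ∈ vars φ, (a ∈ T ↔ a ∈ T')) :
    satH H T φ ↔ satH H' T' φ := by
  induction φ with
  | atom a => exact hH a (by simp [vars])
  | bot => simp [satH]
  | and φ ψ ih1 ih2 =>
      simp only [satH]
      rw [ih1 (fun a ha => hH a (by simp [vars, ha])) (fun a ha => hT a (by simp [vars, ha])),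
        ih2 (fun a ha => hH a (by simp [vars, ha])) (fun a ha => hT a (by simp [vars, ha]))]
  | or φ ψ ih1 ih2 =>
      simp only [satH]
      rw [ih1 (fun a ha => hH a (by simp [vars, ha])) (fun a ha => hT a (by simp [vars, ha])),
        ih2 (fun a ha => hH a (by simp [vars, ha])) (fun a ha => hT a (by simp [vars, ha]))]
  | imp φ ψ ih1 ih2 =>
      simp only [satH]
      rw [ih1 (fun a ha => hH a (by simp [vars, ha])) (fun a ha => hT a (by simp [vars, ha])),
        ih2 (fun a ha => hH a (by simp [vars, ha])) (fun a ha => hT a (by simp [vars, ha])),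
        satT_congr φ T T' (fun a ha => hT a (by simp [vars, ha])),
        satT_congr ψ T T' (fun a ha => hT a (by simp [vars, ha]))]

lemma satT_bigAnd (l : List Fm) (T : Set ℕ) : satT T (bigAnd l) ↔ ∀ φ ∈ l, satT T φ := by
  induction l with
  | nil => simp [bigAnd, Fm.top, satT]
  | cons a l ih =>
      show satT T (Fm.and a (bigAnd l)) ↔ _
      simp [satT, ih]

lemma satH_bigAnd (l : List Fm) (H T : Set ℕ) : satH H T (bigAnd l) ↔ ∀ φ ∈ l, satH H T φ := by
  induction l with
  | nil => simp [bigAnd, Fm.top, satH]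
  | cons a l ih =>
      show satH H T (Fm.and a (bigAnd l)) ↔ _
      simp [satH, ih]

lemma satT_bigOr (l : List Fm) (T : Set ℕ) : satT T (bigOr l) ↔ ∃ φ ∈ l, satT T φ := by
  induction l with
  | nil => simp [bigOr, satT]
  | cons a l ih =>
      show satT T (Fm.or a (bigOr l)) ↔ _
      simp [satT, ih]

lemma satH_bigOr (l : List Fm) (H T : Set ℕ) : satH H T (bigOr l) ↔ ∃ φ ∈ l, satH H T φ := by
  induction l with
  | nil => simp [bigOr, satH]
  | cons a l ih =>
      show satH H T (Fm.or a (bigOr l)) ↔ _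
      simp [satH, ih]

lemma satT_conjAtoms (s : Finset ℕ) (T : Set ℕ) :
    satT T (conjAtoms s) ↔ ∀ a ∈ s, a ∈ T := by
  simp [conjAtoms, satT_bigAnd, satT]

lemma satH_conjAtoms (s : Finset ℕ) (H T : Set ℕ) :
    satH H T (conjAtoms s) ↔ ∀ a ∈ s, a ∈ H := by
  simp [conjAtoms, satH_bigAnd, satH]

lemma satT_disjAtoms (s : Finset ℕ) (T : Set ℕ) :
    satT T (disjAtoms s) ↔ ∃ a ∈ s, a ∈ T := by
  simp [disjAtoms, satT_bigOr, satT]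

lemma satH_disjAtoms (s : Finset ℕ) (H T : Set ℕ) :
    satH H T (disjAtoms s) ↔ ∃ a ∈ s, a ∈ H := by
  simp [disjAtoms, satH_bigOr, satH]

lemma satT_delta (V t : Finset ℕ) (T : Set ℕ) :
    satT T (delta V t) ↔ (∀ a ∈ t, a ∈ T) ∧ ∀ a ∈ V, a ∉ t → a ∉ T := by
  simp only [delta, Fm.neg, satT, satT_conjAtoms, satT_disjAtoms]
  constructor
  · rintro ⟨h1, h2⟩
    exact ⟨h1, fun a hV ht hT => h2 ⟨a, by simp [Finset.mem_sdiff, hV, ht], hT⟩⟩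
  · rintro ⟨h1, h2⟩
    refine ⟨h1, fun ⟨a, ha, hT⟩ => ?_⟩
    rw [Finset.mem_sdiff] at ha
    exact h2 a ha.1 ha.2 hT

lemma satH_delta (V t : Finset ℕ) (H T : Set ℕ) :
    satH H T (delta V t) ↔
      (∀ a ∈ t, a ∈ H) ∧ (∀ a ∈ V, a ∉ t → a ∉ H) ∧ (∀ a ∈ V, a ∉ t → a ∉ T) := by
  simp only [delta, Fm.neg, satH, satT, satH_conjAtoms, satH_disjAtoms, satT_disjAtoms]
  constructor
  · rintro ⟨h1, h2, h3⟩
    exact ⟨h1, fun a hV ht hH => h2 ⟨a, by simp [Finset.mem_sdiff, hV, ht], hH⟩,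
      fun a hV ht hT => h3 ⟨a, by simp [Finset.mem_sdiff, hV, ht], hT⟩⟩
  · rintro ⟨h1, h2, h3⟩
    refine ⟨h1, fun ⟨a, ha, hH⟩ => ?_, fun ⟨a, ha, hT⟩ => ?_⟩
    · rw [Finset.mem_sdiff] at ha; exact h2 a ha.1 ha.2 hH
    · rw [Finset.mem_sdiff] at ha; exact h3 a ha.1 ha.2 hT

lemma vars_bigAnd_atoms (l : List ℕ) : vars (bigAnd (l.map Fm.atom)) ⊆ l.toFinset := by
  induction l with
  | nil => simp [bigAnd, Fm.top, vars]
  | cons a l ih =>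
      show vars (Fm.and (Fm.atom a) (bigAnd (l.map Fm.atom))) ⊆ _
      simp only [vars, List.toFinset_cons]
      intro x hx
      rcases Finset.mem_union.1 hx with h | h
      · simp only [Finset.mem_singleton] at h; simp [h]
      · simp [Finset.mem_insert, ih h]

lemma vars_bigOr_atoms (l : List ℕ) : vars (bigOr (l.map Fm.atom)) ⊆ l.toFinset := by
  induction l with
  | nil => simp [bigOr, vars]
  | cons a l ih =>
      show vars (Fm.or (Fm.atom a) (bigOr (l.map Fm.atom))) ⊆ _
      simp only [vars, List.toFinset_cons]
      intro x hx
      rcases Finset.mem_union.1 hx with h | h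
      · simp only [Finset.mem_singleton] at h; simp [h]
      · simp [Finset.mem_insert, ih h]

lemma vars_delta (V t : Finset ℕ) (ht : t ⊆ V) : vars (delta V t) ⊆ V := by
  simp only [delta, Fm.neg, vars, conjAtoms, disjAtoms, Finset.union_empty]
  intro x hx
  rcases Finset.mem_union.1 hx with h | h
  · have := vars_bigAnd_atoms t.toList h
    rw [Finset.toList_toFinset] at this
    exact ht this
  · have := vars_bigOr_atoms (V \ t).toList h
    rw [Finset.toList_toFinset] at this
    exact (Finset.mem_sdiff.1 this).1

lemma vars_bigOr_deltas (V : Finset ℕ) (l : List (Finset ℕ)) (hl : ∀ t ∈ l, t ⊆ V) :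
    vars (bigOr (l.map (fun t => delta V t))) ⊆ V := by
  induction l with
  | nil => simp [bigOr, vars]
  | cons a l ih =>
      show vars (Fm.or (delta V a) (bigOr (l.map (fun t => delta V t)))) ⊆ _
      simp only [vars]
      intro x hx
      rcases Finset.mem_union.1 hx with h | h
      · exact vars_delta V a (hl a (by simp)) h
      · exact ih (fun t htl => hl t (by simp [htl])) h

open Classical in
/-- List of equilibrium models of `{α}` over `vars α`, as finsets. -/
noncomputable def eqList (α : Fm) : List (Finset ℕ) :=
  ((vars α).powerset.toList).filter
    (fun s => decide (eqModel ((vars α : Finset ℕ) : Set ℕ) {α} (↑s : Set ℕ)))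

open Classical in
lemma mem_eqList (α : Fm) (s : Finset ℕ) :
    s ∈ eqList α ↔ s ⊆ vars α ∧ eqModel ((vars α : Finset ℕ) : Set ℕ) {α} (↑s : Set ℕ) := by
  simp [eqList, List.mem_filter, Finset.mem_toList, Finset.mem_powerset]

/-- The formula capturing the equilibrium models of α over `vars α`. -/
noncomputable def alphaPrime (α : Fm) : Fm :=
  bigOr ((eqList α).map (fun t => delta (vars α) t))

lemma vars_alphaPrime (α : Fm) : vars (alphaPrime α) ⊆ vars α :=
  vars_bigOr_deltas (vars α) (eqList α) (fun t ht => ((mem_eqList α t).1 ht).1)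

/-- interpolation transfer for open-world equilibrium entailment. -/
theorem ow_interpolation (α β : Fm)
    (hcoh : ∃ T : Set ℕ, eqModel ((vars α : Finset ℕ) : Set ℕ) {α} T)
    (how : ∀ T H' T' : Set ℕ, eqModel ((vars α : Finset ℕ) : Set ℕ) {α} T →
      H' ⊆ T' → T' ⊆ ((vars α ∪ vars β : Finset ℕ) : Set ℕ) →
      H' ∩ ((vars α : Finset ℕ) : Set ℕ) = T → T' ∩ ((vars α : Finset ℕ) : Set ℕ) = T →
      htSat H' T' β)
    (hinterp : ∀ φ ψ : Fm, htConseqTh {φ} ψ →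
      ∃ ξ : Fm, vars ξ ⊆ vars φ ∩ vars ψ ∧ htConseqTh {φ} ξ ∧ htConseqTh {ξ} ψ) :
    ∃ γ : Fm, vars γ ⊆ vars α ∩ vars β ∧
      (∀ T H' T' : Set ℕ, eqModel ((vars α : Finset ℕ) : Set ℕ) {α} T →
        H' ⊆ T' → T' ⊆ ((vars α ∪ vars γ : Finset ℕ) : Set ℕ) →
        H' ∩ ((vars α : Finset ℕ) : Set ℕ) = T → T' ∩ ((vars α : Finset ℕ) : Set ℕ) = T →
        htSat H' T' γ) ∧
      htConseqTh {γ} β := by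
  classical
  -- Step 1: alphaPrime α HT-entails β
  have key : htConseqTh {alphaPrime α} β := by
    intro H T hHT
    constructor
    · intro h
      have hA : satH H T (alphaPrime α) := h _ rfl
      rw [alphaPrime, satH_bigOr] at hA
      obtain ⟨δ, hδmem, hδ⟩ := hA
      rw [List.mem_map] at hδmem
      obtain ⟨t, htmem, rfl⟩ := hδmem
      obtain ⟨hts, hteq⟩ := (mem_eqList α t).1 htmem
      rw [satH_delta] at hδ
      obtain ⟨h1, h2, h3⟩ := hδ
      set H'' : Set ℕ := H ∩ ((vars α ∪ vars β : Finset ℕ) : Set ℕ) with hH''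
      set T'' : Set ℕ := T ∩ ((vars α ∪ vars β : Finset ℕ) : Set ℕ) with hT''
      have hHsub : H'' ⊆ T'' := fun a ha => ⟨hHT ha.1, ha.2⟩
      have hHint : H'' ∩ ((vars α : Finset ℕ) : Set ℕ) = (↑t : Set ℕ) := by
        ext a
        simp only [hH'', Set.mem_inter_iff, Finset.coe_union, Set.mem_union, Finset.mem_coe]
        constructor
        · rintro ⟨⟨haH, _⟩, haV⟩
          by_contra hat
          exact h2 a haV hat haH
        · intro hat
          have haV : a ∈ vars α := hts hat
          exact ⟨⟨h1 a hat, Or.inl haV⟩, haV⟩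
      have hTint : T'' ∩ ((vars α : Finset ℕ) : Set ℕ) = (↑t : Set ℕ) := by
        ext a
        simp only [hT'', Set.mem_inter_iff, Finset.coe_union, Set.mem_union, Finset.mem_coe]
        constructor
        · rintro ⟨⟨haT, _⟩, haV⟩
          by_contra hat
          exact h3 a haV hat haT
        · intro hat
          have haV : a ∈ vars α := hts hat
          exact ⟨⟨hHT (h1 a hat), Or.inl haV⟩, haV⟩
      have hβ := how (↑t : Set ℕ) H'' T'' hteq hHsub Set.inter_subset_right hHint hTint
      refine (satH_congr β H T H'' T'' ?_ ?_).mpr hβ.1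
      · intro a ha
        simp only [hH'', Set.mem_inter_iff, Finset.coe_union, Set.mem_union, Finset.mem_coe]
        exact ⟨fun h => ⟨h, Or.inr ha⟩, fun h => h.1⟩
      · intro a ha
        simp only [hT'', Set.mem_inter_iff, Finset.coe_union, Set.mem_union, Finset.mem_coe]
        exact ⟨fun h => ⟨h, Or.inr ha⟩, fun h => h.1⟩
    · intro h
      have hA : satT T (alphaPrime α) := h _ rfl
      rw [alphaPrime, satT_bigOr] at hA
      obtain ⟨δ, hδmem, hδ⟩ := hA
      rw [List.mem_map] at hδmem
      obtain ⟨t, htmem, rfl⟩ := hδmem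
      obtain ⟨hts, hteq⟩ := (mem_eqList α t).1 htmem
      rw [satT_delta] at hδ
      obtain ⟨h1, h2⟩ := hδ
      set T'' : Set ℕ := T ∩ ((vars α ∪ vars β : Finset ℕ) : Set ℕ) with hT''
      have hTint : T'' ∩ ((vars α : Finset ℕ) : Set ℕ) = (↑t : Set ℕ) := by
        ext a
        simp only [hT'', Set.mem_inter_iff, Finset.coe_union, Set.mem_union, Finset.mem_coe]
        constructor
        · rintro ⟨⟨haT, _⟩, haV⟩
          by_contra hat
          exact h2 a haV hat haT
        · intro hat
          have haV : a ∈ vars α := hts hat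
          exact ⟨⟨h1 a hat, Or.inl haV⟩, haV⟩
      have hβ := how (↑t : Set ℕ) T'' T'' hteq (le_refl _) Set.inter_subset_right hTint hTint
      refine (satT_congr β T T'' ?_).mpr hβ.2
      intro a ha
      simp only [hT'', Set.mem_inter_iff, Finset.coe_union, Set.mem_union, Finset.mem_coe]
      exact ⟨fun h => ⟨h, Or.inr ha⟩, fun h => h.1⟩
  -- Step 2: interpolate
  obtain ⟨γ, hγvars, hAγ, hγβ⟩ := hinterp (alphaPrime α) β key
  refine ⟨γ, ?_, ?_, hγβ⟩
  · exact hγvars.trans (Finset.inter_subset_inter (vars_alphaPrime α) (le_refl _))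
  · intro T H' T' heq hsub _ hH hT
    set t : Finset ℕ := (vars α).filter (fun a => a ∈ T) with ht
    have htT : (↑t : Set ℕ) = T := by
      ext a
      simp only [ht, Finset.coe_filter, Set.mem_setOf_eq, Finset.mem_coe]
      exact ⟨fun h => h.2, fun h => ⟨heq.1 h, h⟩⟩
    have htmem : t ∈ eqList α := (mem_eqList α t).2 ⟨Finset.filter_subset _ _, htT ▸ heq⟩
    have hH' : H' ∩ ((vars α : Finset ℕ) : Set ℕ) = (↑t : Set ℕ) := by rw [htT]; exact hH
    have hT' : T' ∩ ((vars α : Finset ℕ) : Set ℕ) = (↑t : Set ℕ) := by rw [htT]; exact hT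
    have hAsat : htSat H' T' (alphaPrime α) := by
      constructor
      · rw [alphaPrime, satH_bigOr]
        refine ⟨delta (vars α) t, List.mem_map.2 ⟨t, htmem, rfl⟩, ?_⟩
        rw [satH_delta]
        refine ⟨?_, ?_, ?_⟩
        · intro a hat
          have : a ∈ H' ∩ ((vars α : Finset ℕ) : Set ℕ) := hH' ▸ (Finset.mem_coe.2 hat)
          exact this.1
        · intro a haV hat haH
          have : a ∈ H' ∩ ((vars α : Finset ℕ) : Set ℕ) := ⟨haH, Finset.mem_coe.2 haV⟩
          rw [hH'] at this
          exact hat (Finset.mem_coe.1 this)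
        · intro a haV hat haT
          have : a ∈ T' ∩ ((vars α : Finset ℕ) : Set ℕ) := ⟨haT, Finset.mem_coe.2 haV⟩
          rw [hT'] at this
          exact hat (Finset.mem_coe.1 this)
      · rw [alphaPrime, satT_bigOr]
        refine ⟨delta (vars α) t, List.mem_map.2 ⟨t, htmem, rfl⟩, ?_⟩
        rw [satT_delta]
        refine ⟨?_, ?_⟩
        · intro a hat
          have : a ∈ T' ∩ ((vars α : Finset ℕ) : Set ℕ) := hT' ▸ (Finset.mem_coe.2 hat)
          exact this.1
        · intro a haV hat haT
          have : a ∈ T' ∩ ((vars α : Finset ℕ) : Set ℕ) := ⟨haT, Finset.mem_coe.2 haV⟩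
          rw [hT'] at this
          exact hat (Finset.mem_coe.1 this)
    have := hAγ H' T' hsub
    exact ⟨this.1 (fun ψ hψ => by rw [Set.mem_singleton_iff] at hψ; subst hψ; exact hAsat.1),
      this.2 (fun ψ hψ => by rw [Set.mem_singleton_iff] at hψ; subst hψ; exact hAsat.2)⟩
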